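/- Let β_t be a CPM and ρ^z_t its induced risk measure for z_d < z < z_u. If β_t is scale invariant, then ρ^z_t is positively homogeneous: ρ^z_t(kX) = k·ρ^z_t(X) for all reals k > 0, hence ρ^z_t is a conditional coherent risk measure. -/
import Mathlib


open MeasureTheory Filter Set Topology

noncomputable section

variable {Ω : Type*}

/-- The lattice of `m`-measurable random variables bounded from below
(possibly `+∞`-valued). -/
def Lbb (m : MeasurableSpace Ω) : Set (Ω → EReal) :=
  {X | Measurable[m] X ∧ ∃ c : ℝ, ∀ ω, (c : EReal) ≤ X ω}

/-- `ρ` is the `P`-essential infimum of the family `S` of (`m`-measurable)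
random variables. -/
def IsEssInfFam {F : MeasurableSpace Ω} (m : MeasurableSpace Ω) (P : @Measure Ω F)
    (S : Set (Ω → EReal)) (ρ : Ω → EReal) : Prop :=
  Measurable[m] ρ ∧ (∀ ξ ∈ S, ∀ᵐ ω ∂P, ρ ω ≤ ξ ω) ∧
    ∀ η : Ω → EReal, Measurable[m] η → (∀ ξ ∈ S, ∀ᵐ ω ∂P, η ω ≤ ξ ω) →
      ∀ᵐ ω ∂P, η ω ≤ ρ ω

/-- `g` is, on the set `C`, the `P`-essential supremum of the family `S`. -/
def IsEssSupFamOn {F : MeasurableSpace Ω} (m : MeasurableSpace Ω) (P : @Measure Ω F)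
    (S : Set (Ω → EReal)) (g : Ω → EReal) (C : Set Ω) : Prop :=
  (∀ φ ∈ S, ∀ᵐ ω ∂P, ω ∈ C → φ ω ≤ g ω) ∧
    ∀ η : Ω → EReal, Measurable[m] η → (∀ φ ∈ S, ∀ᵐ ω ∂P, ω ∈ C → φ ω ≤ η ω) →
      ∀ᵐ ω ∂P, ω ∈ C → g ω ≤ η ω

/-- A conditional performance measure (CPM) `β` conditional to the sub-σ-algebra `m`,
defined on `F`-measurable variables bounded from below, with non-random essential
bounds `zd < zu`. -/
structure IsCPM (F m : MeasurableSpace Ω) (P : @Measure Ω F)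
    (β : (Ω → EReal) → Ω → EReal) (zd zu : EReal) : Prop where
  maps : ∀ X ∈ Lbb F, β X ∈ Lbb m
  quasiConcave : ∀ X ∈ Lbb F, ∀ Y ∈ Lbb F, ∀ c : ℝ, 0 ≤ c → c ≤ 1 →
    ∀ᵐ ω ∂P, min (β X ω) (β Y ω) ≤
      β (fun ω' => (c : EReal) * X ω' + ((1 - c : ℝ) : EReal) * Y ω') ω
  lt_bounds : zd < zu
  le_zu : ∀ X ∈ Lbb F, ∀ᵐ ω ∂P, β X ω ≤ zu
  zu_least : ∀ η : Ω → EReal, Measurable[m] η →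
    (∀ X ∈ Lbb F, ∀ᵐ ω ∂P, β X ω ≤ η ω) → ∀ᵐ ω ∂P, zu ≤ η ω
  zd_le : ∀ X ∈ Lbb F, ∀ᵐ ω ∂P, zd ≤ β X ω
  zd_greatest : ∀ η : Ω → EReal, Measurable[m] η →
    (∀ X ∈ Lbb F, ∀ᵐ ω ∂P, η ω ≤ β X ω) → ∀ᵐ ω ∂P, η ω ≤ zd
  mono : ∀ X Y : Ω → EReal, (∀ ω, Y ω ≤ X ω) → ∀ᵐ ω ∂P, β Y ω ≤ β X ω
  strictShift : ∀ X ∈ Lbb F, ∀ c : ℝ, 0 < c →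
    ∀ᵐ ω ∂P, β X ω < zu → zd < β (fun ω' => X ω' + (c : EReal)) ω →
      β X ω < β (fun ω' => X ω' + (c : EReal)) ω
  contBelow : ∀ (Xs : ℕ → Ω → EReal) (X : Ω → EReal), (∀ n, Xs n ∈ Lbb F) → X ∈ Lbb F →
    (∀ ω, Monotone fun n => Xs n ω) → (∀ ω, X ω = ⨆ n, Xs n ω) →
    ∀ᵐ ω ∂P, β X ω = ⨆ n, β (Xs n) ω
  loc : ∀ X ∈ Lbb F, ∀ B : Set Ω, MeasurableSet[m] B →
    ∀ᵐ ω ∂P, ω ∈ B → β X ω = β (B.indicator X) ω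
  levelBdd : ∀ z : ℝ, zd < (z : EReal) → (z : EReal) < zu →
    ∃ x : ℝ, ∀ ξ ∈ Lbb m, (∀ᵐ ω ∂P, (z : EReal) ≤ β ξ ω) → ∀ᵐ ω ∂P, (x : EReal) ≤ ξ ω

/-- Scale invariance of a conditional performance measure. -/
def ScaleInvariant (F : MeasurableSpace Ω) (P : @Measure Ω F)
    (β : (Ω → EReal) → Ω → EReal) : Prop :=
  ∀ X ∈ Lbb F, ∀ c : ℝ, 0 < c → ∀ᵐ ω ∂P, β (fun ω' => (c : EReal) * X ω') ω = β X ω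

/-- The set `M^z_t(X) = {ξ ∈ L^{bb}_t : β_t(X + ξ) ≥ z}`. -/
def Mset (F m : MeasurableSpace Ω) (P : @Measure Ω F)
    (β : (Ω → EReal) → Ω → EReal) (z : ℝ) (X : Ω → EReal) : Set (Ω → EReal) :=
  {ξ | ξ ∈ Lbb m ∧ ∀ᵐ ω ∂P, (z : EReal) ≤ β (fun ω' => X ω' + ξ ω') ω}

/-- The family of simple `m`-measurable variables `φ = Σ z_i 1_{B_i}` with
`zd < φ < zu` and `ρ^{z_i} < 0` on `B_i ∩ C`. -/
def SimpleFam {F : MeasurableSpace Ω} (m : MeasurableSpace Ω) (P : @Measure Ω F)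
    (ρ : ℝ → Ω → EReal) (zd zu : EReal) (C : Set Ω) : Set (Ω → EReal) :=
  {φ | ∃ (n : ℕ) (zs : Fin n → ℝ) (Bs : Fin n → Set Ω),
    (∀ i, MeasurableSet[m] (Bs i)) ∧ Pairwise (Function.onFun Disjoint Bs) ∧
    (⋃ i, Bs i) = Set.univ ∧
    (∀ i, zd < (zs i : EReal) ∧ (zs i : EReal) < zu) ∧
    (∀ i, ∀ ω ∈ Bs i, φ ω = (zs i : EReal)) ∧
    (∀ i, ∀ᵐ ω ∂P, ω ∈ Bs i ∩ C → ρ (zs i) ω < 0)}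

/-- A standard family of conditional convex risk measures `(σ^z)_{z ∈ (zd, zu)}`. -/
structure IsStdFamily (F m : MeasurableSpace Ω) (P : @Measure Ω F)
    (σ : ℝ → (Ω → EReal) → Ω → EReal) (zd zu : EReal) : Prop where
  lt_bounds : zd < zu
  maps : ∀ z : ℝ, zd < (z : EReal) → (z : EReal) < zu → ∀ X ∈ Lbb F,
    Measurable[m] (σ z X) ∧ ∃ C : ℝ, ∀ ω, σ z X ω ≤ (C : EReal)
  boundedOnBounded : ∀ z : ℝ, zd < (z : EReal) → (z : EReal) < zu → ∀ X ∈ Lbb F,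
    (∃ C : ℝ, ∀ ω, X ω ≤ (C : EReal)) → ∃ c : ℝ, ∀ ω, (c : EReal) ≤ σ z X ω
  convex : ∀ z : ℝ, zd < (z : EReal) → (z : EReal) < zu →
    ∀ X ∈ Lbb F, ∀ Y ∈ Lbb F, ∀ c : ℝ, 0 ≤ c → c ≤ 1 →
    ∀ᵐ ω ∂P, σ z (fun ω' => (c : EReal) * X ω' + ((1 - c : ℝ) : EReal) * Y ω') ω ≤
      (c : EReal) * σ z X ω + ((1 - c : ℝ) : EReal) * σ z Y ω
  anti : ∀ z : ℝ, zd < (z : EReal) → (z : EReal) < zu → ∀ X Y : Ω → EReal,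
    (∀ ω, Y ω ≤ X ω) → ∀ᵐ ω ∂P, σ z X ω ≤ σ z Y ω
  transInv : ∀ z : ℝ, zd < (z : EReal) → (z : EReal) < zu → ∀ X ∈ Lbb F, ∀ ξ ∈ Lbb m,
    ∀ᵐ ω ∂P, σ z (fun ω' => X ω' + ξ ω') ω = σ z X ω - ξ ω
  loc : ∀ z : ℝ, zd < (z : EReal) → (z : EReal) < zu → ∀ X ∈ Lbb F,
    ∀ B : Set Ω, MeasurableSet[m] B →
    ∀ᵐ ω ∂P, ω ∈ B → σ z X ω = σ z (B.indicator X) ω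
  contBelow : ∀ z : ℝ, zd < (z : EReal) → (z : EReal) < zu →
    ∀ (Xs : ℕ → Ω → EReal) (X : Ω → EReal), (∀ n, Xs n ∈ Lbb F) → X ∈ Lbb F →
    (∀ ω, Monotone fun n => Xs n ω) → (∀ ω, X ω = ⨆ n, Xs n ω) →
    ∀ᵐ ω ∂P, σ z X ω = ⨅ n, σ z (Xs n) ω
  paths : ∀ X ∈ Lbb F, ∀ᵐ ω ∂P,
    MonotoneOn (fun z : ℝ => σ z X ω) {z : ℝ | zd < (z : EReal) ∧ (z : EReal) < zu} ∧
    ContinuousOn (fun z : ℝ => σ z X ω) {z : ℝ | zd < (z : EReal) ∧ (z : EReal) < zu}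
  botLim : zd = ⊥ →
    Tendsto (fun z : ℝ => essSup (σ z (fun _ => 0)) P) atBot (𝓝 (⊥ : EReal))

/-- The set `B_X = ∩_{z ∈ (zd,zu)} {σ^z(X) ≥ 0}`. -/
def BXset (σ : ℝ → (Ω → EReal) → Ω → EReal) (zd zu : EReal) (X : Ω → EReal) : Set Ω :=
  {ω | ∀ z : ℝ, zd < (z : EReal) → (z : EReal) < zu → 0 ≤ σ z X ω}

/-- `g` is the value at `X` of the performance measure generated by the standard
family `σ`:  `g = zd 1_{B_X} + 1_{B_X^c} esssup{φ simple : σ^{z_i}(X) < 0 on B_i ∩ B_X^c}`. -/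
def GeneratedBy (F m : MeasurableSpace Ω) (P : @Measure Ω F)
    (σ : ℝ → (Ω → EReal) → Ω → EReal) (zd zu : EReal)
    (X : Ω → EReal) (g : Ω → EReal) : Prop :=
  (∀ᵐ ω ∂P, ω ∈ BXset σ zd zu X → g ω = zd) ∧
  IsEssSupFamOn m P (SimpleFam m P (fun z => σ z X) zd zu ((BXset σ zd zu X)ᶜ)) g
    ((BXset σ zd zu X)ᶜ)

/-- if `β_t` is scale invariant then `ρ^z_t` is positively homogeneous:
`ρ^z_t(kX) = k ρ^z_t(X)` for all `k > 0`. -/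
lemma aux_measurable_add {α : Type*} [MeasurableSpace α] {f g : α → EReal}
    (hf : Measurable f) (hg : Measurable g) : Measurable fun x => f x + g x := by
  have h : (fun x => f x + g x) = fun x =>
      if f x = ⊥ ∨ g x = ⊥ then ⊥ else if f x = ⊤ ∨ g x = ⊤ then (⊤ : EReal)
      else (((f x).toReal + (g x).toReal : ℝ) : EReal) := by
    funext x
    induction f x using EReal.rec <;> induction g x using EReal.rec <;>
      simp [← EReal.coe_add]
  rw [h]
  refine Measurable.ite ((hf (measurableSet_singleton ⊥)).union (hg (measurableSet_singleton ⊥)))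
    measurable_const ?_
  refine Measurable.ite ((hf (measurableSet_singleton ⊤)).union (hg (measurableSet_singleton ⊤)))
    measurable_const ?_
  exact measurable_coe_real_ereal.comp (hf.ereal_toReal.add hg.ereal_toReal)

lemma aux_measurable_const_mul (k : ℝ) : Measurable fun x : EReal => (k : EReal) * x := by
  apply EReal.measurable_of_measurable_real
  simpa [← EReal.coe_mul] using (measurable_const_mul k).coe_real_ereal

lemma aux_distrib {k : ℝ} (hk : 0 < k) {a b : EReal} (ha : a ≠ ⊥) (hb : b ≠ ⊥) :
    (k : EReal) * (a + b) = (k : EReal) * a + (k : EReal) * b := by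
  have hk' : (0 : EReal) < (k : EReal) := by exact_mod_cast hk
  induction a using EReal.rec <;> induction b using EReal.rec <;>
    simp_all [← EReal.coe_add, ← EReal.coe_mul, EReal.mul_top_of_pos hk',
      EReal.top_add_top, EReal.coe_add_top, EReal.top_add_coe, mul_add]

lemma aux_cancel {k k' : ℝ} (h : k' * k = 1) (x : EReal) :
    (k' : EReal) * ((k : EReal) * x) = x := by
  rw [← mul_assoc, ← EReal.coe_mul, h, EReal.coe_one, one_mul]

lemma aux_smul_mem_Lbb {m : MeasurableSpace Ω} {ξ : Ω → EReal} (hξ : ξ ∈ Lbb m)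
    {k : ℝ} (hk : 0 < k) : (fun ω => (k : EReal) * ξ ω) ∈ Lbb m := by
  obtain ⟨hmeas, c, hc⟩ := hξ
  refine ⟨(aux_measurable_const_mul k).comp hmeas, k * c, fun ω => ?_⟩
  rw [EReal.coe_mul]
  exact mul_le_mul_of_nonneg_left (hc ω) (by exact_mod_cast hk.le)

lemma aux_smul_mem_Mset {F m : MeasurableSpace Ω} (hm : m ≤ F) {P : @Measure Ω F}
    {β : (Ω → EReal) → Ω → EReal} (hscale : ScaleInvariant F P β)
    {z : ℝ} {X : Ω → EReal} (hX : X ∈ Lbb F) {k : ℝ} (hk : 0 < k)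
    {ξ : Ω → EReal} (hξ : ξ ∈ Mset F m P β z X) :
    (fun ω => (k : EReal) * ξ ω) ∈ Mset F m P β z (fun ω => (k : EReal) * X ω) := by
  obtain ⟨hξL, hξβ⟩ := hξ
  refine ⟨aux_smul_mem_Lbb hξL hk, ?_⟩
  obtain ⟨hXm, cX, hcX⟩ := hX
  obtain ⟨hξm, cξ, hcξ⟩ := hξL
  have hsum : (fun ω => X ω + ξ ω) ∈ Lbb F := by
    refine ⟨@aux_measurable_add Ω F _ _ hXm (hξm.mono hm le_rfl), cX + cξ, fun ω => ?_⟩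
    rw [EReal.coe_add]; exact add_le_add (hcX ω) (hcξ ω)
  have heq : (fun ω' => (k : EReal) * X ω' + (k : EReal) * ξ ω') =
      fun ω' => (k : EReal) * (X ω' + ξ ω') := by
    funext ω'
    exact (aux_distrib hk (ne_bot_of_le_ne_bot (EReal.coe_ne_bot cX) (hcX ω'))
      (ne_bot_of_le_ne_bot (EReal.coe_ne_bot cξ) (hcξ ω'))).symm
  have hsc := hscale _ hsum k hk
  filter_upwards [hξβ, hsc] with ω h1 h2
  rw [heq, h2]; exact h1

theorem stmt_9 {Ω : Type*} (F m : MeasurableSpace Ω) (hm : m ≤ F) (P : @Measure Ω F)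
    (β : (Ω → EReal) → Ω → EReal) (zd zu : EReal)
    (hCPM : IsCPM F m P β zd zu) (hscale : ScaleInvariant F P β)
    (z : ℝ) (hz₁ : zd < (z : EReal)) (hz₂ : (z : EReal) < zu)
    (X : Ω → EReal) (hX : X ∈ Lbb F)
    (k : ℝ) (hk : 0 < k)
    (ρX ρk : Ω → EReal)
    (h₁ : IsEssInfFam m P (Mset F m P β z X) ρX)
    (h₂ : IsEssInfFam m P (Mset F m P β z (fun ω => (k : EReal) * X ω)) ρk) :
    ∀ᵐ ω ∂P, ρk ω = (k : EReal) * ρX ω := by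
  have hk' : 0 < 1 / k := by positivity
  have hcan : (1 / k) * k = 1 := by field_simp
  have hcan' : k * (1 / k) = 1 := by field_simp
  have hkX : (fun ω => (k : EReal) * X ω) ∈ Lbb F := aux_smul_mem_Lbb hX hk
  have hback : ∀ ξ ∈ Mset F m P β z (fun ω => (k : EReal) * X ω),
      (fun ω => ((1 / k : ℝ) : EReal) * ξ ω) ∈ Mset F m P β z X := by
    intro ξ hξ
    have := aux_smul_mem_Mset hm hscale hkX hk' hξ
    have hXeq : (fun ω => ((1 / k : ℝ) : EReal) * ((k : EReal) * X ω)) = X := by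
      funext ω; exact aux_cancel hcan _
    rwa [hXeq] at this
  have hknn : (0 : EReal) ≤ (k : EReal) := by exact_mod_cast hk.le
  have hknn' : (0 : EReal) ≤ ((1 / k : ℝ) : EReal) := by exact_mod_cast hk'.le
  -- direction 1 : k ρX ≤ ρk
  have hd1 : ∀ᵐ ω ∂P, (k : EReal) * ρX ω ≤ ρk ω := by
    apply h₂.2.2 _ ((aux_measurable_const_mul k).comp h₁.1)
    intro ξ hξ
    filter_upwards [h₁.2.1 _ (hback ξ hξ)] with ω hω
    calc (k : EReal) * ρX ω ≤ (k : EReal) * (((1 / k : ℝ) : EReal) * ξ ω) :=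
          mul_le_mul_of_nonneg_left hω hknn
      _ = ξ ω := aux_cancel hcan' _
  -- direction 2 : ρk ≤ k ρX
  have hd2' : ∀ᵐ ω ∂P, ((1 / k : ℝ) : EReal) * ρk ω ≤ ρX ω := by
    apply h₁.2.2 _ ((aux_measurable_const_mul (1 / k)).comp h₂.1)
    intro ξ hξ
    filter_upwards [h₂.2.1 _ (aux_smul_mem_Mset hm hscale hX hk hξ)] with ω hω
    calc ((1 / k : ℝ) : EReal) * ρk ω ≤ ((1 / k : ℝ) : EReal) * ((k : EReal) * ξ ω) :=
          mul_le_mul_of_nonneg_left hω hknn'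
      _ = ξ ω := aux_cancel hcan _
  filter_upwards [hd1, hd2'] with ω h1 h2
  refine le_antisymm ?_ h1
  calc ρk ω = (k : EReal) * (((1 / k : ℝ) : EReal) * ρk ω) := (aux_cancel hcan' _).symm
    _ ≤ (k : EReal) * ρX ω := mul_le_mul_of_nonneg_left h2 hknn
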